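/- Let X be a locally compact topological space, (Y,d) a boundedly compact metric space, and suppose E ⊆ LB(X,Y) is closed in the topology of uniform convergence on compact sets, pointwise bounded, and finitely equicontinuous. Then E is compact in (LB(X,Y), τ_UC). -/
import Mathlib


open Set Filter Topology Metric Bornology UniformConvergence
open scoped Uniformity

/-- Finite equicontinuity of a family `E` at a point `x`. -/
def FinEquicontAt {X Y : Type*} [TopologicalSpace X] [MetricSpace Y]
    (E : Set (X → Y)) (x : X) : Prop :=
  ∀ ε > (0 : ℝ), ∃ 𝓑 : Finset (Set X), ⋃₀ (𝓑 : Set (Set X)) ∈ 𝓝 x ∧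
    ∀ f ∈ E, ∀ B ∈ 𝓑, ∀ p ∈ B, ∀ q ∈ B, dist (f p) (f q) < ε

/-- Finite equicontinuity of a family `E`. -/
def FinEquicont {X Y : Type*} [TopologicalSpace X] [MetricSpace Y]
    (E : Set (X → Y)) : Prop :=
  ∀ x : X, FinEquicontAt E x

/-- A function is locally bounded if every point has an open neighbourhood with bounded image. -/
def LocBounded {X Y : Type*} [TopologicalSpace X] [MetricSpace Y] (f : X → Y) : Prop :=
  ∀ x : X, ∃ U : Set X, IsOpen U ∧ x ∈ U ∧ IsBounded (f '' U)

/-- A locally bounded function is bounded on compact sets. -/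
lemma LocBounded.isBounded_image {X Y : Type*} [TopologicalSpace X] [MetricSpace Y]
    {f : X → Y} (hf : LocBounded f) {K : Set X} (hK : IsCompact K) :
    IsBounded (f '' K) := by
  choose U hUo hxU hUb using hf
  obtain ⟨t, -, htK⟩ := hK.elim_nhds_subcover U (fun x _ => (hUo x).mem_nhds (hxU x))
  have hsub : f '' K ⊆ ⋃ x ∈ t, f '' U x := by
    rintro y ⟨x, hxK, rfl⟩
    obtain ⟨z, hz, hxz⟩ := mem_iUnion₂.1 (htK hxK)
    exact mem_iUnion₂.2 ⟨z, hz, mem_image_of_mem f hxz⟩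
  exact ((Bornology.isBounded_biUnion t.finite_toSet).2 (fun x _ => hUb x)).subset hsub

theorem stmt9_aux {X Y : Type*} [TopologicalSpace X] [LocallyCompactSpace X]
    [MetricSpace Y] [ProperSpace Y] (𝔖 : Set (Set X)) (h𝔖 : 𝔖 = {K : Set X | IsCompact K})
    (E : Set (X →ᵤ[𝔖] Y))
    (hE : ∀ f ∈ E, LocBounded (UniformOnFun.toFun 𝔖 f))
    (hcl : IsClosed ((Subtype.val ⁻¹' E) :
        Set {f : X →ᵤ[𝔖] Y // LocBounded (UniformOnFun.toFun 𝔖 f)}))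
    (hpb : ∀ x : X, IsBounded
        ((fun f : X →ᵤ[𝔖] Y => UniformOnFun.toFun 𝔖 f x) '' E))
    (hfe : FinEquicont ((UniformOnFun.toFun 𝔖) '' E)) :
    IsCompact E := by
  classical
  -- Step 1: the set of locally bounded functions is closed
  have hLB : IsClosed {f : X →ᵤ[𝔖] Y | LocBounded (UniformOnFun.toFun 𝔖 f)} := by
    refine isClosed_of_closure_subset fun f hf x => ?_
    obtain ⟨K, hKc, hKx⟩ := exists_compact_mem_nhds x
    have hV : {p : Y × Y | dist p.1 p.2 < 1} ∈ 𝓤 Y := Metric.dist_mem_uniformity one_pos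
    have hK𝔖 : K ∈ 𝔖 := by rw [h𝔖]; exact hKc
    have hgen : UniformOnFun.gen 𝔖 K {p : Y × Y | dist p.1 p.2 < 1} ∈ 𝓤 (X →ᵤ[𝔖] Y) :=
      UniformOnFun.gen_mem_uniformity Y 𝔖 hK𝔖 hV
    obtain ⟨g, hgball, hgLB⟩ := UniformSpace.mem_closure_iff_ball.1 hf hgen
    have hgb : IsBounded (UniformOnFun.toFun 𝔖 g '' K) := hgLB.isBounded_image hKc
    obtain ⟨r, hr⟩ := hgb.subset_closedBall (UniformOnFun.toFun 𝔖 f x)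
    refine ⟨interior K, isOpen_interior, mem_interior_iff_mem_nhds.2 hKx, ?_⟩
    refine (isBounded_closedBall (x := UniformOnFun.toFun 𝔖 f x) (r := r + 1)).subset ?_
    rintro y ⟨z, hz, rfl⟩
    have hzK : z ∈ K := interior_subset hz
    have h1 : dist (UniformOnFun.toFun 𝔖 f z) (UniformOnFun.toFun 𝔖 g z) < 1 :=
      hgball z hzK
    have h2 : UniformOnFun.toFun 𝔖 g z ∈ closedBall (UniformOnFun.toFun 𝔖 f x) r :=
      hr (mem_image_of_mem _ hzK)
    rw [mem_closedBall] at h2 ⊢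
    calc dist (UniformOnFun.toFun 𝔖 f z) (UniformOnFun.toFun 𝔖 f x)
        ≤ dist (UniformOnFun.toFun 𝔖 f z) (UniformOnFun.toFun 𝔖 g z)
          + dist (UniformOnFun.toFun 𝔖 g z) (UniformOnFun.toFun 𝔖 f x) := dist_triangle _ _ _
      _ ≤ r + 1 := by linarith
  -- Step 2 : E is closed in the whole space
  have hEc : IsClosed E := by
    have himg := hLB.isClosedEmbedding_subtypeVal.isClosedMap _ hcl
    have hEeq : Subtype.val '' (Subtype.val ⁻¹' E :
        Set {f : X →ᵤ[𝔖] Y // LocBounded (UniformOnFun.toFun 𝔖 f)}) = E := by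
      ext f
      simp only [Set.mem_image, Set.mem_preimage]
      exact ⟨fun ⟨g, hg, hgf⟩ => hgf ▸ hg, fun hfE => ⟨⟨f, hE f hfE⟩, hfE, rfl⟩⟩
    exact hEeq ▸ himg
  rw [isCompact_iff_totallyBounded_isComplete]
  refine ⟨?_, hEc.isComplete⟩
  -- Step 3 : E is totally bounded
  have hne : 𝔖.Nonempty := ⟨∅, by rw [h𝔖]; exact isCompact_empty⟩
  have hdir : DirectedOn (· ⊆ ·) 𝔖 := by
    rw [h𝔖]
    exact fun K₁ h₁ K₂ h₂ =>
    ⟨K₁ ∪ K₂, h₁.union h₂, subset_union_left, subset_union_right⟩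
  rw [(UniformOnFun.hasBasis_uniformity_of_basis X Y 𝔖 hne hdir
    Metric.uniformity_basis_dist).totallyBounded_iff]
  rintro ⟨K, ε⟩ ⟨hK, hε⟩
  simp only at hε ⊢
  have hKc : IsCompact K := by rw [h𝔖] at hK; exact hK
  rcases E.eq_empty_or_nonempty with hEe | ⟨f₀, hf₀⟩
  · exact ⟨∅, finite_empty, by simp [hEe]⟩
  rcases isEmpty_or_nonempty X with hX | hX
  · refine ⟨{f₀}, finite_singleton _, fun f hf => mem_iUnion₂.2 ⟨f₀, rfl, ?_⟩⟩
    intro x hx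
    exact (IsEmpty.false x).elim
  haveI : Nonempty Y := ⟨UniformOnFun.toFun 𝔖 f₀ (Classical.arbitrary X)⟩
  set y₀ : Y := Classical.arbitrary Y with hy₀
  have hε4 : (0 : ℝ) < ε / 4 := by linarith
  choose 𝓑 h𝓑nhds h𝓑osc using fun x : X => hfe x (ε / 4) hε4
  obtain ⟨t, -, htK⟩ := hKc.elim_nhds_subcover (fun x => ⋃₀ ↑(𝓑 x)) (fun x _ => h𝓑nhds x)
  set 𝓒 : Finset (Set X) := t.biUnion 𝓑 with h𝓒
  have hKcov : ∀ x ∈ K, ∃ B ∈ 𝓒, x ∈ B := by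
    intro x hx
    obtain ⟨z, hz, hxz⟩ := mem_iUnion₂.1 (htK hx)
    obtain ⟨B, hB, hxB⟩ := hxz
    exact ⟨B, Finset.mem_biUnion.2 ⟨z, hz, hB⟩, hxB⟩
  have hosc : ∀ f ∈ E, ∀ B ∈ 𝓒, ∀ p ∈ B, ∀ q ∈ B,
      dist (UniformOnFun.toFun 𝔖 f p) (UniformOnFun.toFun 𝔖 f q) < ε / 4 := by
    intro f hf B hB p hp q hq
    obtain ⟨z, hz, hBz⟩ := Finset.mem_biUnion.1 hB
    exact h𝓑osc z _ (mem_image_of_mem _ hf) B hBz p hp q hq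
  -- choose a point in each (nonempty) member of 𝓒
  set p : Set X → X := fun B => if h : B.Nonempty then h.some else Classical.arbitrary X with hpdef
  have hp : ∀ B : Set X, B.Nonempty → p B ∈ B := by
    intro B h
    simp only [hpdef, dif_pos h]
    exact h.some_mem
  -- finite ε/4-nets for the values at the chosen points
  have hDex : ∀ B : Set X, ∃ D : Finset Y,
      ((fun f : X →ᵤ[𝔖] Y => UniformOnFun.toFun 𝔖 f (p B)) '' E) ⊆ ⋃ y ∈ D, ball y (ε / 4) := by
    intro B
    have htb : TotallyBounded ((fun f : X →ᵤ[𝔖] Y => UniformOnFun.toFun 𝔖 f (p B)) '' E) :=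
      ((hpb (p B)).isCompact_closure.totallyBounded).subset subset_closure
    obtain ⟨D, hDfin, hDsub⟩ := Metric.totallyBounded_iff.1 htb _ hε4
    refine ⟨hDfin.toFinset, ?_⟩
    simpa only [Set.Finite.mem_toFinset] using hDsub
  choose D hD using hDex
  -- the indexing type
  let ι := ∀ B : ↥𝓒, ↥(insert y₀ (D B.1))
  let Φ : (X →ᵤ[𝔖] Y) → ι := fun f B =>
    if h : ∃ y ∈ insert y₀ (D B.1), dist (UniformOnFun.toFun 𝔖 f (p B.1)) y < ε / 4
    then ⟨h.choose, h.choose_spec.1⟩ else ⟨y₀, Finset.mem_insert_self _ _⟩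
  have hΦ : ∀ f ∈ E, ∀ B : ↥𝓒,
      dist (UniformOnFun.toFun 𝔖 f (p B.1)) ((Φ f B : Y)) < ε / 4 := by
    intro f hf B
    have hmem := hD B.1 (mem_image_of_mem _ hf)
    obtain ⟨y, hy, hby⟩ := mem_iUnion₂.1 hmem
    have hex : ∃ y ∈ insert y₀ (D B.1), dist (UniformOnFun.toFun 𝔖 f (p B.1)) y < ε / 4 :=
      ⟨y, Finset.mem_insert_of_mem hy, mem_ball.1 hby⟩
    simp only [Φ, dif_pos hex]
    exact hex.choose_spec.2
  -- representatives
  let T : ι → (X →ᵤ[𝔖] Y) := fun i => if h : ∃ f ∈ E, Φ f = i then h.choose else f₀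
  refine ⟨Set.range T, Set.finite_range T, fun f hf => ?_⟩
  have hex : ∃ f' ∈ E, Φ f' = Φ f := ⟨f, hf, rfl⟩
  have hgE : T (Φ f) ∈ E ∧ Φ (T (Φ f)) = Φ f := by
    simp only [T, dif_pos hex]
    exact ⟨hex.choose_spec.1, hex.choose_spec.2⟩
  refine mem_iUnion₂.2 ⟨T (Φ f), mem_range_self _, ?_⟩
  intro x hx
  obtain ⟨B, hB𝓒, hxB⟩ := hKcov x hx
  have hpB : p B ∈ B := hp B ⟨x, hxB⟩
  set g := T (Φ f) with hgdef
  have h1 := hosc f hf B hB𝓒 x hxB (p B) hpB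
  have h2 := hosc g hgE.1 B hB𝓒 (p B) hpB x hxB
  have h3 := hΦ f hf ⟨B, hB𝓒⟩
  have h4 := hΦ g hgE.1 ⟨B, hB𝓒⟩
  have hc : ((Φ g ⟨B, hB𝓒⟩ : Y)) = ((Φ f ⟨B, hB𝓒⟩ : Y)) := by rw [hgE.2]
  show dist (UniformOnFun.toFun 𝔖 f x) (UniformOnFun.toFun 𝔖 g x) < ε
  have hmid : dist (UniformOnFun.toFun 𝔖 f (p B)) (UniformOnFun.toFun 𝔖 g (p B)) < ε / 2 := by
    calc dist (UniformOnFun.toFun 𝔖 f (p B)) (UniformOnFun.toFun 𝔖 g (p B))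
        ≤ dist (UniformOnFun.toFun 𝔖 f (p B)) ((Φ f ⟨B, hB𝓒⟩ : Y))
          + dist ((Φ f ⟨B, hB𝓒⟩ : Y)) (UniformOnFun.toFun 𝔖 g (p B)) := dist_triangle _ _ _
      _ < ε / 2 := by
          have h4' : dist ((Φ f ⟨B, hB𝓒⟩ : Y)) (UniformOnFun.toFun 𝔖 g (p B)) < ε / 4 := by
            rw [← hc, dist_comm]
            exact h4
          linarith
  calc dist (UniformOnFun.toFun 𝔖 f x) (UniformOnFun.toFun 𝔖 g x)
      ≤ dist (UniformOnFun.toFun 𝔖 f x) (UniformOnFun.toFun 𝔖 f (p B))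
        + dist (UniformOnFun.toFun 𝔖 f (p B)) (UniformOnFun.toFun 𝔖 g (p B))
        + dist (UniformOnFun.toFun 𝔖 g (p B)) (UniformOnFun.toFun 𝔖 g x) :=
      dist_triangle4 _ _ _ _
    _ < ε := by linarith
theorem stmt9 {X Y : Type*} [TopologicalSpace X] [LocallyCompactSpace X]
    [MetricSpace Y] [ProperSpace Y]
    (E : Set (X →ᵤ[{K : Set X | IsCompact K}] Y))
    (hE : ∀ f ∈ E, LocBounded (UniformOnFun.toFun {K : Set X | IsCompact K} f))
    (hcl : IsClosed ((Subtype.val ⁻¹' E) :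
        Set {f : X →ᵤ[{K : Set X | IsCompact K}] Y //
          LocBounded (UniformOnFun.toFun {K : Set X | IsCompact K} f)}))
    (hpb : ∀ x : X, IsBounded
        ((fun f : X →ᵤ[{K : Set X | IsCompact K}] Y =>
          UniformOnFun.toFun {K : Set X | IsCompact K} f x) '' E))
    (hfe : FinEquicont ((UniformOnFun.toFun {K : Set X | IsCompact K}) '' E)) :
    IsCompact E := by
  exact stmt9_aux _ rfl E hE hcl hpb hfe
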